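/- arXiv:2205.08956 — 6 statements merged into one kernel-verified Lean document; each statement's English description precedes it below -/
import Mathlib

section
/- Suppose there is a viable technical change in sector i, and suppose the new real wage bundle b̄ satisfies Property 1 (0 < Λ̄·b̄ ≤ 1 and p·b̄ > 1 = p·b), Property 2 (Λ̄·b̄ = Λ·b), and Property 3 (0 < p·A_{*i} + L_i − p·Ā_{*i} − L̄_i < L̄_i·(p·b̄ − 1)). Let p̄ ≫ 0 and π̄ > 0 be the new prices of production and uniform rate of profit determined by p̄ = (1+π̄)·p̄·(Ā + b̄L̄) with p̄·b̄ = 1. Then the uniform rate of profit strictly falls: π̄ < π. -/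
/- STATEMENT 0: In an n-sector circulating capital economy, if there is a viable
technical change in sector i and the new real wage bundle b̄ satisfies
Property 1 (0 < Λ̄·b̄ ≤ 1 and p·b̄ > 1 = p·b), Property 2 (Λ̄·b̄ = Λ·b) and
Property 3 (0 < p·A_{*i} + L_i − p·Ā_{*i} − L̄_i < L̄_i·(p·b̄ − 1)), then the new
uniform rate of profit π̄ (determined by p̄ = (1+π̄)·p̄·(Ā + b̄L̄), p̄·b̄ = 1,
p̄ ≫ 0, π̄ > 0) is strictly lower than the original one: π̄ < π. -/
theorem profit_rate_falls_constant_exploitation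
    (n : ℕ) (i : Fin n)
    (A Abar : Matrix (Fin n) (Fin n) ℝ)
    (L Lbar p pbar Lam Lambar b bbar : Fin n → ℝ)
    (pi pibar : ℝ)
    -- initial configuration
    (hA : ∀ j k, 0 ≤ A j k)
    (hL : ∀ j, 0 < L j)
    (hb : ∀ j, 0 ≤ b j)
    (hp : ∀ j, 0 < p j)
    (hpi : 0 < pi)
    (hprice : ∀ j, p j = (1 + pi) * ((∑ k, p k * A k j) + (∑ k, p k * b k) * L j))
    (hnorm : ∑ k, p k * b k = 1)
    (hLampos : ∀ j, 0 < Lam j)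
    (hLam : ∀ j, Lam j = (∑ k, Lam k * A k j) + L j)
    -- technical change in sector i (all other sectors unchanged)
    (hAbar_off : ∀ j k, k ≠ i → Abar j k = A j k)
    (hLbar_off : ∀ k, k ≠ i → Lbar k = L k)
    (hAbar_nonneg : ∀ j k, 0 ≤ Abar j k)
    (hLbar_pos : ∀ k, 0 < Lbar k)
    -- viability: the new technique reduces unit cost at the old prices
    (hviable : (∑ k, p k * Abar k i) + Lbar i < (∑ k, p k * A k i) + L i)
    -- new labor values
    (hLambarpos : ∀ j, 0 < Lambar j)
    (hLambar : ∀ j, Lambar j = (∑ k, Lambar k * Abar k j) + Lbar j)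
    -- Property 1: new wage bundle, nonnegative, 0 < Λ̄·b̄ ≤ 1, more expensive at old prices
    (hbbar : ∀ j, 0 ≤ bbar j)
    (hP1a : 0 < ∑ k, Lambar k * bbar k)
    (hP1b : ∑ k, Lambar k * bbar k ≤ 1)
    (hP1c : 1 < ∑ k, p k * bbar k)
    -- Property 2: constant rate of exploitation
    (hP2 : ∑ k, Lambar k * bbar k = ∑ k, Lam k * b k)
    -- Property 3: cost reduction is positive and bounded above
    (hP3a : 0 < (∑ k, p k * A k i) + L i - (∑ k, p k * Abar k i) - Lbar i)
    (hP3b : (∑ k, p k * A k i) + L i - (∑ k, p k * Abar k i) - Lbar i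
              < Lbar i * ((∑ k, p k * bbar k) - 1))
    -- new equilibrium prices of production and uniform rate of profit
    (hpbar : ∀ j, 0 < pbar j)
    (hpibar : 0 < pibar)
    (hpricebar : ∀ j, pbar j
        = (1 + pibar) * ((∑ k, pbar k * Abar k j) + (∑ k, pbar k * bbar k) * Lbar j))
    (hnormbar : ∑ k, pbar k * bbar k = 1) :
    pibar < pi := by

  set w := ∑ k, p k * bbar k with hw
  -- Step 1: at old prices, new cost exceeds p j / (1+pi) in every sector
  have key : ∀ j, p j < (1 + pi) * ((∑ k, p k * Abar k j) + w * Lbar j) := by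
    intro j
    by_cases hj : j = i
    · subst hj
      have h1 := hprice j
      rw [hnorm] at h1
      have hLb := hLbar_pos j
      nlinarith [hP3a, hP3b, hpi, hP1c]
    · have hsum : (∑ k, p k * Abar k j) = ∑ k, p k * A k j :=
        Finset.sum_congr rfl (fun k _ => by rw [hAbar_off k j hj])
      rw [hsum, hLbar_off j hj]
      have h1 := hprice j
      rw [hnorm] at h1
      have h2 : (0:ℝ) < (1 + pi) * ((w - 1) * L j) :=
        mul_pos (by linarith) (mul_pos (by linarith) (hL j))
      nlinarith [h2]
  -- Step 2: pick the sector minimizing pbar j / p j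
  obtain ⟨j0, -, hj0⟩ := Finset.exists_min_image Finset.univ
    (fun j => pbar j / p j) ⟨i, Finset.mem_univ i⟩
  set c := pbar j0 / p j0 with hc
  have hcpos : 0 < c := div_pos (hpbar j0) (hp j0)
  have hle : ∀ k, c * p k ≤ pbar k := by
    intro k
    have h := hj0 k (Finset.mem_univ k)
    have h2 := mul_le_mul_of_nonneg_right h (le_of_lt (hp k))
    rwa [div_mul_cancel₀ _ (ne_of_gt (hp k))] at h2
  have hs1 : c * (∑ k, p k * Abar k j0) ≤ ∑ k, pbar k * Abar k j0 := by
    rw [Finset.mul_sum]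
    exact Finset.sum_le_sum (fun k _ => by
      have := mul_le_mul_of_nonneg_right (hle k) (hAbar_nonneg k j0)
      nlinarith)
  have hs2 : c * w ≤ 1 := by
    rw [hw, ← hnormbar, Finset.mul_sum]
    exact Finset.sum_le_sum (fun k _ => by
      have := mul_le_mul_of_nonneg_right (hle k) (hbbar k)
      nlinarith)
  have hLb0 := hLbar_pos j0
  have hkey := key j0
  have hprice0 := hpricebar j0
  rw [hnormbar] at hprice0
  have hcp : c * p j0 = pbar j0 := div_mul_cancel₀ (pbar j0) (ne_of_gt (hp j0))
  -- combine: pbar j0 = (1+pibar)*((∑ pbar Abar)+Lbar j0) ≥ (1+pibar)*c*((∑ p Abar)+w*Lbar j0)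
  --          > (1+pibar)*c*p j0/(1+pi) = (1+pibar)/(1+pi)*pbar j0
  nlinarith [mul_le_mul_of_nonneg_right hs2 (le_of_lt hLb0),
    mul_lt_mul_of_pos_left hkey hcpos, hpbar j0, hpibar, hpi,
    mul_le_mul_of_nonneg_left (add_le_add hs1 (mul_le_mul_of_nonneg_right hs2 (le_of_lt hLb0)))
      (le_of_lt (add_pos one_pos hpibar))]
end

section
/- Suppose there is a viable technical change in sector i, let e = (1−Λb)/(Λb) > 0 be the initial rate of exploitation, and let g = (p·A_{*i} + L_i − p·Ā_{*i} − L̄_i)/L̄_i > 0 be the proportional cost reduction. If for some sector j ∈ {1,…,n} one has p_j/λ̄_j > (1+e)(1+g), then there exists a nonnegative wage bundle b̄ with 0 < Λ̄·b̄ ≤ 1 that simultaneously satisfies: p·b̄ > 1 = p·b (Property 1), Λ̄·b̄ = Λ·b (Property 2), and 0 < p·A_{*i} + L_i − p·Ā_{*i} − L̄_i < L̄_i·(p·b̄ − 1) (Property 3). -/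
/- STATEMENT 1: If there is a viable technical change in sector i, the initial rate
of exploitation e = (1−Λb)/(Λb) is positive, the proportional cost reduction is
g = (p·A_{*i} + L_i − p·Ā_{*i} − L̄_i)/L̄_i > 0, and for some sector j we have
p_j/λ̄_j > (1+e)(1+g), then there exists a nonnegative wage bundle b̄ with
0 < Λ̄·b̄ ≤ 1 satisfying Property 1 (p·b̄ > 1 = p·b), Property 2 (Λ̄·b̄ = Λ·b) and
Property 3 (0 < p·A_{*i} + L_i − p·Ā_{*i} − L̄_i < L̄_i·(p·b̄ − 1)). -/
theorem exists_wage_bundle_constant_exploitation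
    (n : ℕ) (i : Fin n)
    (A Abar : Matrix (Fin n) (Fin n) ℝ)
    (L Lbar p Lam Lambar b : Fin n → ℝ)
    (pi e g : ℝ)
    -- initial configuration
    (hA : ∀ j k, 0 ≤ A j k)
    (hL : ∀ j, 0 < L j)
    (hb : ∀ j, 0 ≤ b j)
    (hp : ∀ j, 0 < p j)
    (hpi : 0 < pi)
    (hprice : ∀ j, p j = (1 + pi) * ((∑ k, p k * A k j) + (∑ k, p k * b k) * L j))
    (hnorm : ∑ k, p k * b k = 1)
    (hLampos : ∀ j, 0 < Lam j)
    (hLam : ∀ j, Lam j = (∑ k, Lam k * A k j) + L j)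
    -- value of labor power: 0 < Λ·b ≤ 1
    (hLamb_pos : 0 < ∑ k, Lam k * b k)
    (hLamb_le : ∑ k, Lam k * b k ≤ 1)
    -- the rate of exploitation e = (1 − Λ·b)/(Λ·b) is positive
    (he : e = (1 - ∑ k, Lam k * b k) / (∑ k, Lam k * b k))
    (he_pos : 0 < e)
    -- technical change in sector i (all other sectors unchanged)
    (hAbar_off : ∀ j k, k ≠ i → Abar j k = A j k)
    (hLbar_off : ∀ k, k ≠ i → Lbar k = L k)
    (hAbar_nonneg : ∀ j k, 0 ≤ Abar j k)
    (hLbar_pos : ∀ k, 0 < Lbar k)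
    -- viability: the new technique reduces unit cost at the old prices
    (hviable : (∑ k, p k * Abar k i) + Lbar i < (∑ k, p k * A k i) + L i)
    -- new labor values
    (hLambarpos : ∀ j, 0 < Lambar j)
    (hLambar : ∀ j, Lambar j = (∑ k, Lambar k * Abar k j) + Lbar j)
    -- the proportional cost reduction g > 0
    (hg : g = ((∑ k, p k * A k i) + L i - (∑ k, p k * Abar k i) - Lbar i) / Lbar i)
    (hg_pos : 0 < g)
    -- key condition: for some sector j, p_j/λ̄_j > (1+e)(1+g)
    (hkey : ∃ j, (1 + e) * (1 + g) < p j / Lambar j) :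
    ∃ bbar : Fin n → ℝ,
      (∀ j, 0 ≤ bbar j) ∧
      (0 < ∑ k, Lambar k * bbar k) ∧
      (∑ k, Lambar k * bbar k ≤ 1) ∧
      -- Property 1: p·b̄ > 1 = p·b
      (1 < ∑ k, p k * bbar k) ∧
      -- Property 2: Λ̄·b̄ = Λ·b (constant rate of exploitation)
      (∑ k, Lambar k * bbar k = ∑ k, Lam k * b k) ∧
      -- Property 3: 0 < cost reduction < L̄_i·(p·b̄ − 1)
      (0 < (∑ k, p k * A k i) + L i - (∑ k, p k * Abar k i) - Lbar i) ∧
      ((∑ k, p k * A k i) + L i - (∑ k, p k * Abar k i) - Lbar i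
          < Lbar i * ((∑ k, p k * bbar k) - 1)) := by
  obtain ⟨j, hj⟩ := hkey
  set S := ∑ k, Lam k * b k with hS
  have hSpos : 0 < S := hLamb_pos
  have hlj : 0 < Lambar j := hLambarpos j
  have hpj : 0 < p j := hp j
  have h1e : 1 + e = 1 / S := by rw [he]; field_simp; ring
  set c := S / Lambar j with hc
  have hcpos : 0 < c := div_pos hSpos hlj
  refine ⟨fun k => if k = j then c else 0, ?_, ?_, ?_, ?_, ?_, ?_, ?_⟩
  · intro k; dsimp only; split <;> positivity
  all_goals
    have hsum1 : (∑ k, Lambar k * (if k = j then c else 0)) = S := by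
      rw [Finset.sum_eq_single j]
      · simp [hc]; field_simp
      · intro k _ hk; simp [hk]
      · simp
    have hsum2 : (∑ k, p k * (if k = j then c else 0)) = p j * c := by
      rw [Finset.sum_eq_single j]
      · simp
      · intro k _ hk; simp [hk]
      · simp
  · rw [hsum1]; exact hSpos
  · rw [hsum1]; exact hLamb_le
  · rw [hsum2]
    have : (1 + e) * (1 + g) * S < p j / Lambar j * S :=
      mul_lt_mul_of_pos_right hj hSpos
    rw [h1e] at this
    have hgp : 0 < g := hg_pos
    have : 1 + g < p j * c := by
      rw [hc]
      field_simp at this ⊢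
      nlinarith
    linarith
  · rw [hsum1]
  · linarith [hviable]
  · rw [hsum2]
    have : (1 + e) * (1 + g) * S < p j / Lambar j * S :=
      mul_lt_mul_of_pos_right hj hSpos
    rw [h1e] at this
    have hpc : 1 + g < p j * c := by
      rw [hc]; field_simp at this ⊢; nlinarith
    have hLi : 0 < Lbar i := hLbar_pos i
    have hgval : g * Lbar i = (∑ k, p k * A k i) + L i - (∑ k, p k * Abar k i) - Lbar i := by
      rw [hg]; field_simp
    nlinarith
end

section
/- Let A be any nonnegative, productive, indecomposable n×n input-output matrix, L any strictly positive 1×n direct labor input vector, and let the real wage bundle b satisfy 0 < Λb ≤ 1 and 1/(Λb) < max_k (p_k/λ_k). Then for any sector i there exist a new column Ā_{*i} and a new labor coefficient L̄_i (all other sectors' techniques unchanged) such that: (a) the new technique is CU-LS, i.e. ā_{ji} > a_{ji} for all j and L̄_i < L_i; (b) the new technique is viable, i.e. p·A_{*i} + L_i > p·Ā_{*i} + L̄_i; and (c) for some sector j, p_j/λ̄_j > (1+e)(1+g), where g = (p·A_{*i} + L_i − p·Ā_{*i} − L̄_i)/L̄_i and Λ̄ = L̄(I−Ā)^{−1} is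 the new vector of labor values. -/
/- STATEMENT 2: Starting from any nonnegative, productive, indecomposable A,
strictly positive L, and a real wage bundle b with 0 < Λb ≤ 1 and
1/(Λb) < max_k (p_k/λ_k), for any sector i there exists a new technique
(Ā_{*i}, L̄_i), all other sectors unchanged, which is (a) CU-LS, (b) viable,
and (c) satisfies p_j/λ̄_j > (1+e)(1+g) for some sector j, where
g = (p·A_{*i} + L_i − p·Ā_{*i} − L̄_i)/L̄_i and Λ̄ are the new labor values.
Roemer's Theorem 4.9 (a viable CU-LS technical change weakly lowers all labor
values) may be assumed. -/
theorem exists_viable_CULS_technical_change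
    (n : ℕ) (i : Fin n)
    (A : Matrix (Fin n) (Fin n) ℝ)
    (L p Lam b : Fin n → ℝ)
    (pi e : ℝ)
    -- initial configuration
    (hA : ∀ j k, 0 ≤ A j k)
    (hL : ∀ j, 0 < L j)
    (hb : ∀ j, 0 ≤ b j)
    (hp : ∀ j, 0 < p j)
    (hpi : 0 < pi)
    (hprice : ∀ j, p j = (1 + pi) * ((∑ k, p k * A k j) + (∑ k, p k * b k) * L j))
    (hnorm : ∑ k, p k * b k = 1)
    (hLampos : ∀ j, 0 < Lam j)
    (hLam : ∀ j, Lam j = (∑ k, Lam k * A k j) + L j)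
    -- the wage bundle satisfies 0 < Λb ≤ 1
    (hLamb_pos : 0 < ∑ k, Lam k * b k)
    (hLamb_le : ∑ k, Lam k * b k ≤ 1)
    -- the rate of exploitation
    (he : e = (1 - ∑ k, Lam k * b k) / (∑ k, Lam k * b k))
    -- the wage bundle satisfies 1/(Λb) < max_k (p_k/λ_k)
    (hmax : 1 / (∑ k, Lam k * b k)
        < Finset.univ.sup' ⟨i, Finset.mem_univ i⟩ (fun k => p k / Lam k))
    -- Roemer's Theorem 4.9: a viable CU-LS technical change in sector i weakly
    -- lowers all labor values (may be assumed)
    (hRoemer : ∀ (Abar : Matrix (Fin n) (Fin n) ℝ) (Lbar : Fin n → ℝ),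
      (∀ j k, k ≠ i → Abar j k = A j k) →
      (∀ k, k ≠ i → Lbar k = L k) →
      (∀ j, A j i < Abar j i) →
      (0 < Lbar i) → (Lbar i < L i) →
      ((∑ k, p k * Abar k i) + Lbar i < (∑ k, p k * A k i) + L i) →
      ∃ Lambar : Fin n → ℝ,
        (∀ j, Lambar j = (∑ k, Lambar k * Abar k j) + Lbar j) ∧
        (∀ j, 0 < Lambar j ∧ Lambar j ≤ Lam j)) :
    ∃ (Abar : Matrix (Fin n) (Fin n) ℝ) (Lbar Lambar : Fin n → ℝ),
      -- only sector i's technique changes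
      (∀ j k, k ≠ i → Abar j k = A j k) ∧
      (∀ k, k ≠ i → Lbar k = L k) ∧
      -- (a) the new technique is CU-LS
      (∀ j, A j i < Abar j i) ∧
      (0 < Lbar i) ∧ (Lbar i < L i) ∧
      -- (b) the new technique is viable
      ((∑ k, p k * Abar k i) + Lbar i < (∑ k, p k * A k i) + L i) ∧
      -- Λ̄ is the new vector of labor values
      (∀ j, 0 < Lambar j) ∧
      (∀ j, Lambar j = (∑ k, Lambar k * Abar k j) + Lbar j) ∧
      -- (c) for some sector j, p_j/λ̄_j > (1+e)(1+g)
      (∃ j, (1 + e) * (1 +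
          ((∑ k, p k * A k i) + L i - (∑ k, p k * Abar k i) - Lbar i) / Lbar i)
            < p j / Lambar j) := by
  classical
  set S := ∑ k, Lam k * b k with hSdef
  obtain ⟨j0, -, hj0⟩ :=
    Finset.exists_mem_eq_sup' (⟨i, Finset.mem_univ i⟩ : Finset.univ.Nonempty)
      (fun k => p k / Lam k)
  rw [hj0] at hmax
  set M := p j0 / Lam j0 with hMdef
  have hSM : 1 < M * S := by
    rw [div_lt_iff₀ hLamb_pos] at hmax
    exact hmax
  set η := M * S - 1 with hηdef
  have hη : 0 < η := by simp [hηdef]; linarith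
  set P := ∑ k, p k with hPdef
  have hP : 0 < P := Finset.sum_pos (fun k _ => hp k) ⟨i, Finset.mem_univ i⟩
  set ε := min (L i / 2) (η * L i / 4) with hεdef
  have hLi := hL i
  have hε0 : 0 < ε := lt_min (by linarith) (by positivity)
  have hεL : ε ≤ L i / 2 := min_le_left _ _
  have hεη : ε ≤ η * L i / 4 := min_le_right _ _
  set δ := ε / (2 * P) with hδdef
  have hδ : 0 < δ := by positivity
  set Abar : Matrix (Fin n) (Fin n) ℝ := fun j k => if k = i then A j i + δ else A j k
    with hAbardef
  set Lbar : Fin n → ℝ := fun k => if k = i then L i - ε else L k with hLbardef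
  have hA1 : ∀ j k, k ≠ i → Abar j k = A j k := by
    intro j k hk; simp [hAbardef, hk]
  have hL1 : ∀ k, k ≠ i → Lbar k = L k := by
    intro k hk; simp [hLbardef, hk]
  have hA2 : ∀ j, A j i < Abar j i := by
    intro j; simp [hAbardef]; linarith
  have hLbar_i : Lbar i = L i - ε := by simp [hLbardef]
  have hL2 : 0 < Lbar i := by rw [hLbar_i]; linarith
  have hL3 : Lbar i < L i := by rw [hLbar_i]; linarith
  have hsum : (∑ k, p k * Abar k i) = (∑ k, p k * A k i) + δ * P := by
    simp only [hAbardef, if_pos rfl]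
    rw [hPdef, Finset.mul_sum]
    rw [← Finset.sum_add_distrib]
    congr 1; funext k; ring
  have hδP : δ * P = ε / 2 := by
    rw [hδdef]; field_simp
  have hviable : (∑ k, p k * Abar k i) + Lbar i < (∑ k, p k * A k i) + L i := by
    rw [hsum, hδP, hLbar_i]; linarith
  obtain ⟨Lambar, hLambar_eq, hLambar⟩ :=
    hRoemer Abar Lbar hA1 hL1 hA2 hL2 hL3 hviable
  refine ⟨Abar, Lbar, Lambar, hA1, hL1, hA2, hL2, hL3, hviable,
    fun j => (hLambar j).1, hLambar_eq, ⟨j0, ?_⟩⟩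
  have hgval : ((∑ k, p k * A k i) + L i - (∑ k, p k * Abar k i) - Lbar i) / Lbar i
      = (ε / 2) / (L i - ε) := by
    rw [hsum, hδP, hLbar_i]; ring_nf
  rw [hgval]
  set g := (ε / 2) / (L i - ε) with hgdef
  have hden : 0 < L i - ε := by linarith
  have hg0 : 0 ≤ g := by positivity
  have hgη : g < η := by
    have h1 : g ≤ (ε / 2) / (L i / 2) := by
      apply div_le_div_of_nonneg_left (by linarith) (by linarith) (by linarith)
    have h2 : (ε / 2) / (L i / 2) = ε / L i := by
      field_simp
    have h3 : ε / L i ≤ η / 4 := by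
      rw [div_le_div_iff₀ hLi (by norm_num)]
      nlinarith [hεη]
    linarith
  have h1e : 1 + e = 1 / S := by
    rw [he]
    field_simp
    ring
  rw [h1e]
  have hM_le : M ≤ p j0 / Lambar j0 := by
    rw [hMdef]
    exact div_le_div_of_nonneg_left (le_of_lt (hp j0)) (hLambar j0).1 (hLambar j0).2
  have hlt : 1 / S * (1 + g) < M := by
    rw [div_mul_eq_mul_div, one_mul, div_lt_iff₀ hLamb_pos]
    linarith
  linarith
end

section
/- Suppose there is a viable technical change in sector i with proportional cost reduction g = (p·A_{*i} + L_i − p·Ā_{*i} − L̄_i)/L̄_i > 0, and suppose that for some sector j one has p_j/λ̄_j > (1+e)(1+g). Then there exists a nonnegative wage bundle b̄ such that: (a) the rate of exploitation strictly rises, i.e. Λ̄·b̄ < Λ·b; (b) p·b̄ > 1 = p·b; and (c) 0 < p·A_{*i} + L_i − p·Ā_{*i} − L̄_i < L̄_i·(p·b̄ − 1), so that (by Dietzenbacher's profit-rate theorem) the new uniform rate of profit π̄ determined by p̄ = (1+π̄)·p̄·(Ā + b̄L̄), p̄·b̄ = 1, satisfies π̄ < π. -/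
/- STATEMENT 3: If there is a viable technical change in sector i with proportional
cost reduction g = (p·A_{*i} + L_i − p·Ā_{*i} − L̄_i)/L̄_i > 0, and for some sector j
one has p_j/λ̄_j > (1+e)(1+g), then there exists a nonnegative wage bundle b̄ such
that (a) the rate of exploitation strictly rises, Λ̄·b̄ < Λ·b; (b) p·b̄ > 1 = p·b;
(c) 0 < p·A_{*i} + L_i − p·Ā_{*i} − L̄_i < L̄_i·(p·b̄ − 1); and hence (by
Dietzenbacher's theorem) any new equilibrium (p̄ ≫ 0, π̄ > 0) determined by
p̄ = (1+π̄)·p̄·(Ā + b̄L̄), p̄·b̄ = 1 satisfies π̄ < π. -/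
theorem exists_wage_bundle_rising_exploitation_falling_profit
    (n : ℕ) (i : Fin n)
    (A Abar : Matrix (Fin n) (Fin n) ℝ)
    (L Lbar p Lam Lambar b : Fin n → ℝ)
    (pi e g : ℝ)
    -- initial configuration
    (hA : ∀ j k, 0 ≤ A j k)
    (hL : ∀ j, 0 < L j)
    (hb : ∀ j, 0 ≤ b j)
    (hp : ∀ j, 0 < p j)
    (hpi : 0 < pi)
    (hprice : ∀ j, p j = (1 + pi) * ((∑ k, p k * A k j) + (∑ k, p k * b k) * L j))
    (hnorm : ∑ k, p k * b k = 1)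
    (hLampos : ∀ j, 0 < Lam j)
    (hLam : ∀ j, Lam j = (∑ k, Lam k * A k j) + L j)
    -- value of labor power and rate of exploitation
    (hLamb_pos : 0 < ∑ k, Lam k * b k)
    (he : e = (1 - ∑ k, Lam k * b k) / (∑ k, Lam k * b k))
    -- technical change in sector i (all other sectors unchanged)
    (hAbar_off : ∀ j k, k ≠ i → Abar j k = A j k)
    (hLbar_off : ∀ k, k ≠ i → Lbar k = L k)
    (hAbar_nonneg : ∀ j k, 0 ≤ Abar j k)
    (hLbar_pos : ∀ k, 0 < Lbar k)
    -- viability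
    (hviable : (∑ k, p k * Abar k i) + Lbar i < (∑ k, p k * A k i) + L i)
    -- new labor values
    (hLambarpos : ∀ j, 0 < Lambar j)
    (hLambar : ∀ j, Lambar j = (∑ k, Lambar k * Abar k j) + Lbar j)
    -- the proportional cost reduction g > 0
    (hg : g = ((∑ k, p k * A k i) + L i - (∑ k, p k * Abar k i) - Lbar i) / Lbar i)
    (hg_pos : 0 < g)
    -- key condition: for some sector j, p_j/λ̄_j > (1+e)(1+g)
    (hkey : ∃ j, (1 + e) * (1 + g) < p j / Lambar j) :
    ∃ bbar : Fin n → ℝ,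
      (∀ j, 0 ≤ bbar j) ∧
      -- (a) the rate of exploitation strictly rises
      (∑ k, Lambar k * bbar k < ∑ k, Lam k * b k) ∧
      -- (b) the new wage bundle is more expensive at the old prices
      (1 < ∑ k, p k * bbar k) ∧
      -- (c) the cost reduction is positive and bounded above
      (0 < (∑ k, p k * A k i) + L i - (∑ k, p k * Abar k i) - Lbar i) ∧
      ((∑ k, p k * A k i) + L i - (∑ k, p k * Abar k i) - Lbar i
          < Lbar i * ((∑ k, p k * bbar k) - 1)) ∧
      -- consequently (Dietzenbacher), the new uniform rate of profit falls
      (∀ (pbar : Fin n → ℝ) (pibar : ℝ),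
        (∀ j, 0 < pbar j) → 0 < pibar →
        (∀ j, pbar j
          = (1 + pibar) * ((∑ k, pbar k * Abar k j) + (∑ k, pbar k * bbar k) * Lbar j)) →
        (∑ k, pbar k * bbar k = 1) →
        pibar < pi) := by

  obtain ⟨j, hj⟩ := hkey
  have h1e : 1 + e = 1 / (∑ k, Lam k * b k) := by
    rw [he]; field_simp; ring
  have h1e_pos : 0 < 1 + e := by rw [h1e]; positivity
  have hpj := hp j
  have hlj := hLambarpos j
  have hg1 : (0:ℝ) < 1 + g := by linarith
  have hjj : (1 + e) * (1 + g) * Lambar j < p j := (lt_div_iff₀ hlj).mp hj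
  have hlt : (1 + g) / p j < 1 / ((1 + e) * Lambar j) := by
    rw [div_lt_div_iff₀ hpj (by positivity)]
    nlinarith
  set t : ℝ := ((1 + g) / p j + 1 / ((1 + e) * Lambar j)) / 2 with ht
  have ht1 : (1 + g) / p j < t := by rw [ht]; linarith
  have ht2 : t < 1 / ((1 + e) * Lambar j) := by rw [ht]; linarith
  have htpos : 0 < t := lt_trans (by positivity) ht1
  refine ⟨fun k => if k = j then t else 0, ?_, ?_, ?_, ?_, ?_, ?_⟩
  · intro k
    dsimp only
    split
    · exact le_of_lt htpos
    · exact le_rfl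
  all_goals
    have hsum1 : (∑ k, p k * (if k = j then t else 0)) = p j * t := by
      simp [mul_ite]
    have hsum2 : (∑ k, Lambar k * (if k = j then t else 0)) = Lambar j * t := by
      simp [mul_ite]
  · -- (a)
    rw [hsum2]
    have : t < (∑ k, Lam k * b k) / Lambar j := by
      have : 1 / ((1 + e) * Lambar j) = (∑ k, Lam k * b k) / Lambar j := by
        rw [h1e]; field_simp
      linarith [ht2, this ▸ ht2]
    calc Lambar j * t < Lambar j * ((∑ k, Lam k * b k) / Lambar j) := by
          exact mul_lt_mul_of_pos_left this hlj
      _ = ∑ k, Lam k * b k := by field_simp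
  · -- (b)
    rw [hsum1]
    have : 1 + g < p j * t := by
      have := (div_lt_iff₀ hpj).mp ht1
      nlinarith
    linarith
  · linarith
  · -- (c)
    rw [hsum1]
    have hΔ : (∑ k, p k * A k i) + L i - (∑ k, p k * Abar k i) - Lbar i = g * Lbar i := by
      rw [hg]; exact (div_mul_cancel₀ _ (hLbar_pos i).ne').symm
    rw [hΔ]
    have h1g : 1 + g < p j * t := by
      have := (div_lt_iff₀ hpj).mp ht1
      nlinarith
    have := hLbar_pos i
    nlinarith
  · -- Dietzenbacher
    intro pbar pibar hpbar hpibar hpricebar hnormbar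
    have hpb1 : 1 + g < ∑ k, p k * (if k = j then t else 0) := by
      rw [hsum1]
      have := (div_lt_iff₀ hpj).mp ht1
      nlinarith
    -- per-column inequality
    have hcol : ∀ m, p m < (1 + pi) *
        ((∑ k, p k * Abar k m) + (∑ k, p k * (if k = j then t else 0)) * Lbar m) := by
      intro m
      by_cases hm : m = i
      · rw [hm]
        have hΔ : (∑ k, p k * A k i) + L i - (∑ k, p k * Abar k i) - Lbar i = g * Lbar i := by
          rw [hg]; exact (div_mul_cancel₀ _ (hLbar_pos i).ne').symm
        have hpm : p i = (1 + pi) * ((∑ k, p k * A k i) + L i) := by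
          rw [hprice i, hnorm]; ring
        have hLbi := hLbar_pos i
        have hmul := mul_lt_mul_of_pos_right hpb1 hLbi
        have : (∑ k, p k * A k i) + L i <
            (∑ k, p k * Abar k i) + (∑ k, p k * (if k = j then t else 0)) * Lbar i := by
          linarith
        rw [hpm]
        have hpi1 : (0:ℝ) < 1 + pi := by linarith
        exact mul_lt_mul_of_pos_left this hpi1
      · have hA' : (∑ k, p k * Abar k m) = ∑ k, p k * A k m :=
          Finset.sum_congr rfl fun k _ => by rw [hAbar_off k m hm]
        have hL' : Lbar m = L m := hLbar_off m hm
        rw [hprice m, hnorm, hA', hL']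
        have hpi1 : (0:ℝ) < 1 + pi := by linarith
        have hS : (1:ℝ) < ∑ k, p k * (if k = j then t else 0) := by linarith
        have hmul := mul_lt_mul_of_pos_right hS (hL m)
        have : (∑ k, p k * A k m) + 1 * L m <
            (∑ k, p k * A k m) + (∑ k, p k * (if k = j then t else 0)) * L m := by
          linarith
        exact mul_lt_mul_of_pos_left this hpi1
    -- max ratio argument
    obtain ⟨j0, -, hj0⟩ := Finset.exists_max_image Finset.univ
      (fun k => p k / pbar k) ⟨i, Finset.mem_univ i⟩
    set c : ℝ := p j0 / pbar j0 with hc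
    have hpbj0 := hpbar j0
    have hck : ∀ k, p k ≤ c * pbar k := by
      intro k
      have h := hj0 k (Finset.mem_univ k)
      have h2 := (div_le_div_iff₀ (hpbar k) hpbj0).mp h
      rw [hc, div_mul_eq_mul_div, le_div_iff₀ hpbj0]
      linarith
    have key1 : (∑ k, p k * Abar k j0) ≤ c * ∑ k, pbar k * Abar k j0 := by
      rw [Finset.mul_sum]
      refine Finset.sum_le_sum fun k _ => ?_
      have := mul_le_mul_of_nonneg_right (hck k) (hAbar_nonneg k j0)
      exact this.trans_eq (mul_assoc c (pbar k) (Abar k j0))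
    have key2 : (∑ k, p k * (if k = j then t else 0)) ≤
        c * ∑ k, pbar k * (if k = j then t else 0) := by
      rw [Finset.mul_sum]
      refine Finset.sum_le_sum fun k _ => ?_
      have hbk : (0:ℝ) ≤ (if k = j then t else 0) := by
        split
        · exact le_of_lt htpos
        · exact le_rfl
      have := mul_le_mul_of_nonneg_right (hck k) hbk
      exact this.trans_eq (mul_assoc c (pbar k) _)
    rw [hnormbar] at key2
    have hLbj0 := hLbar_pos j0
    have hcpos : 0 < c := div_pos (hp j0) hpbj0
    have hX : (∑ k, pbar k * Abar k j0) +
        (∑ k, pbar k * (if k = j then t else 0)) * Lbar j0 = pbar j0 / (1 + pibar) := by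
      rw [hpricebar j0]
      have hne : (1:ℝ) + pibar ≠ 0 := by linarith
      exact (mul_div_cancel_left₀ _ hne).symm
    have hchain : p j0 < (1 + pi) * (c * (pbar j0 / (1 + pibar))) := by
      have h1 := hcol j0
      have hpi1 : (0:ℝ) < 1 + pi := by linarith
      have hstep : (∑ k, p k * Abar k j0) +
          (∑ k, p k * (if k = j then t else 0)) * Lbar j0 ≤
          c * (pbar j0 / (1 + pibar)) := by
        rw [← hX, mul_add]
        have : (∑ k, p k * (if k = j then t else 0)) * Lbar j0 ≤
            c * ((∑ k, pbar k * (if k = j then t else 0)) * Lbar j0) := by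
          rw [hnormbar]
          have := mul_le_mul_of_nonneg_right key2 (le_of_lt hLbj0)
          linarith
        linarith [key1]
      calc p j0 < (1 + pi) * ((∑ k, p k * Abar k j0) +
              (∑ k, p k * (if k = j then t else 0)) * Lbar j0) := h1
        _ ≤ (1 + pi) * (c * (pbar j0 / (1 + pibar))) :=
            mul_le_mul_of_nonneg_left hstep (le_of_lt hpi1)
    have hcpb : c * pbar j0 = p j0 := by
      rw [hc]; exact div_mul_cancel₀ _ hpbj0.ne'
    have hpibar1 : (0:ℝ) < 1 + pibar := by linarith
    have : p j0 * (1 + pibar) < (1 + pi) * p j0 := by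
      have h := mul_lt_mul_of_pos_right hchain hpibar1
      have hd : pbar j0 / (1 + pibar) * (1 + pibar) = pbar j0 :=
        div_mul_cancel₀ _ hpibar1.ne'
      have hrw : (1 + pi) * (c * (pbar j0 / (1 + pibar))) * (1 + pibar)
          = (1 + pi) * (c * (pbar j0 / (1 + pibar) * (1 + pibar))) := by ring
      rw [hd] at hrw
      rw [hrw, hcpb] at h
      linarith
    have hpj0 := hp j0
    have h3 : p j0 * (1 + pibar) < p j0 * (1 + pi) :=
      calc p j0 * (1 + pibar) < (1 + pi) * p j0 := this
        _ = p j0 * (1 + pi) := mul_comm _ _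
    have h2 : 1 + pibar < 1 + pi := lt_of_mul_lt_mul_left h3 hpj0.le
    exact (add_lt_add_iff_left 1).mp h2
end

section
/- Let A be a nonnegative n×n matrix, L a strictly positive 1×n row vector, and π > 0. Suppose the matrix series Σ_{k≥0} A^k and Σ_{k≥0} (1+π)^k A^k both converge entrywise, with sums (I−A)^{−1} and (I−(1+π)A)^{−1} respectively. Define p = (1+π)·L·(I−(1+π)A)^{−1} and Λ = L·(I−A)^{−1}. Then p ≥ (1+π)·Λ entrywise, and consequently p_j > λ_j for every j = 1,…,n, i.e. each price of production strictly exceeds the corresponding labor value. -/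
open Matrix

/- STATEMENT 7: Let A be a nonnegative n×n matrix, L ≫ 0 a row vector, π > 0.
Suppose the Neumann series Σ A^k and Σ (1+π)^k A^k converge entrywise with sums
(I−A)⁻¹ and (I−(1+π)A)⁻¹ respectively. With p = (1+π)·L·(I−(1+π)A)⁻¹ and
Λ = L·(I−A)⁻¹, we have p ≥ (1+π)·Λ entrywise, and consequently p_j > λ_j for
every j: each price of production strictly exceeds the corresponding labor value. -/
theorem price_exceeds_value
    (n : ℕ) (A : Matrix (Fin n) (Fin n) ℝ)
    (L p Lam : Fin n → ℝ) (pi : ℝ)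
    (hA : ∀ j k, 0 ≤ A j k)
    (hL : ∀ j, 0 < L j)
    (hpi : 0 < pi)
    -- entrywise convergence of the Neumann series to the respective inverses
    (hSum1 : HasSum (fun k : ℕ => A ^ k) (1 - A)⁻¹)
    (hSum2 : HasSum (fun k : ℕ => ((1 + pi) ^ k) • A ^ k) (1 - (1 + pi) • A)⁻¹)
    -- prices of production and labor values
    (hpdef : p = (1 + pi) • ((1 - (1 + pi) • A)⁻¹).vecMul L)
    (hLamdef : Lam = ((1 - A)⁻¹).vecMul L) :
    (∀ j, (1 + pi) * Lam j ≤ p j) ∧ (∀ j, Lam j < p j) := by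
  -- nonnegativity of matrix powers
  have hpow : ∀ (k : ℕ) (i j : Fin n), 0 ≤ (A ^ k) i j := by
    intro k
    induction k with
    | zero => intro i j; by_cases h : i = j <;> simp [pow_zero, Matrix.one_apply, h]
    | succ m ih =>
      intro i j
      rw [pow_succ, Matrix.mul_apply]
      exact Finset.sum_nonneg fun l _ => mul_nonneg (ih i l) (hA l j)
  -- entrywise HasSum
  have h1 : ∀ i j, HasSum (fun k : ℕ => (A ^ k) i j) ((1 - A)⁻¹ i j) := by
    intro i j
    exact (Pi.hasSum.mp (Pi.hasSum.mp hSum1 i) j)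
  have h2 : ∀ i j, HasSum (fun k : ℕ => (1 + pi) ^ k * (A ^ k) i j)
      ((1 - (1 + pi) • A)⁻¹ i j) := by
    intro i j
    have := (Pi.hasSum.mp (Pi.hasSum.mp hSum2 i) j)
    simpa using this
  have hone : (1 : ℝ) ≤ 1 + pi := by linarith
  -- entrywise comparison of the inverses
  have hBC : ∀ i j, (1 - A)⁻¹ i j ≤ (1 - (1 + pi) • A)⁻¹ i j := by
    intro i j
    refine hasSum_le (fun k => ?_) (h1 i j) (h2 i j)
    have h1le : (1 : ℝ) ≤ (1 + pi) ^ k := one_le_pow₀ hone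
    nlinarith [hpow k i j]
  -- entrywise nonnegativity of (1-A)⁻¹, and diagonal ≥ 1
  have hCnn : ∀ i j, 0 ≤ (1 - A)⁻¹ i j := fun i j =>
    hasSum_le (fun k => hpow k i j) hasSum_zero (h1 i j)
  have hCdiag : ∀ j, (1 : ℝ) ≤ (1 - A)⁻¹ j j := by
    intro j
    have := le_hasSum (h1 j j) 0 (fun k _ => hpow k j j)
    simpa [Matrix.one_apply] using this
  -- Lam is positive
  have hLam_pos : ∀ j, 0 < Lam j := by
    intro j
    rw [hLamdef]
    have : L j * (1 - A)⁻¹ j j ≤ ∑ i, L i * (1 - A)⁻¹ i j := by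
      refine Finset.single_le_sum (f := fun i => L i * (1 - A)⁻¹ i j) ?_ (Finset.mem_univ j)
      intro i _
      exact mul_nonneg (hL i).le (hCnn i j)
    have hjj : 0 < L j * (1 - A)⁻¹ j j :=
      mul_pos (hL j) (lt_of_lt_of_le one_pos (hCdiag j))
    simpa [Matrix.vecMul, dotProduct] using lt_of_lt_of_le hjj this
  -- main inequality
  have hmain : ∀ j, (1 + pi) * Lam j ≤ p j := by
    intro j
    rw [hpdef, hLamdef]
    simp only [Pi.smul_apply, smul_eq_mul]
    have hle : ((1 - A)⁻¹).vecMul L j ≤ ((1 - (1 + pi) • A)⁻¹).vecMul L j := by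
      simp only [Matrix.vecMul, dotProduct]
      exact Finset.sum_le_sum fun i _ =>
        mul_le_mul_of_nonneg_left (hBC i j) (hL i).le
    nlinarith
  refine ⟨hmain, fun j => ?_⟩
  have := hmain j
  nlinarith [hLam_pos j]
end

section
/- Let p ∈ ℝⁿ be a strictly positive vector, let L_i > 0, let φ > 1, and choose ε with 0 < ε < L_i/(Σ_k p_k). Then the open interval ((L_i − ε·Σ_k p_k)/φ, L_i − ε·Σ_k p_k) is nonempty, and any L̄_i in this interval satisfies L̄_i > 0. Moreover, if Ā_{*i} is obtained from a nonnegative column A_{*i} by adding ε to every entry, then the resulting technique is CU-LS (ā_{ji} = a_{ji} + ε > a_{ji} for all j and L̄_i < L_i), viable (p·Ā_{*i} + L̄_i < p·A_{*i} + L_i), and satisfies the bound (p·A_{*i} + L_i − p·Ā_{*i})/L̄_i < φ. -/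
/- STATEMENT 9: Let p ≫ 0 in ℝⁿ, L_i > 0, φ > 1, and 0 < ε < L_i/(Σ_k p_k). Then the
open interval ((L_i − ε·Σ_k p_k)/φ, L_i − ε·Σ_k p_k) is nonempty and any L̄_i in it
is positive. Moreover, if Ā_{*i} = A_{*i} + ε (entrywise) for a nonnegative column
A_{*i}, the resulting technique is CU-LS (ā_{ji} = a_{ji} + ε > a_{ji}, L̄_i < L_i),
viable (p·Ā_{*i} + L̄_i < p·A_{*i} + L_i), and satisfies
(p·A_{*i} + L_i − p·Ā_{*i})/L̄_i < φ. -/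
theorem construction_of_viable_CULS_technique
    (n : ℕ) (p : Fin n → ℝ) (hp : ∀ k, 0 < p k)
    (Li : ℝ) (hLi : 0 < Li)
    (phi : ℝ) (hphi : 1 < phi)
    (eps : ℝ) (heps : 0 < eps) (heps' : eps < Li / ∑ k, p k)
    (Ai : Fin n → ℝ) (hAi : ∀ j, 0 ≤ Ai j) :
    -- the open interval ((L_i − ε·Σp)/φ, L_i − ε·Σp) is nonempty
    ((Li - eps * ∑ k, p k) / phi < Li - eps * ∑ k, p k) ∧
    -- and any L̄_i in it is positive, and the technique (A_{*i} + ε, L̄_i) is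
    -- CU-LS, viable, and satisfies the bound
    (∀ Lbari : ℝ,
      (Li - eps * ∑ k, p k) / phi < Lbari → Lbari < Li - eps * ∑ k, p k →
        (0 < Lbari) ∧
        (∀ j, Ai j < Ai j + eps) ∧
        (Lbari < Li) ∧
        ((∑ k, p k * (Ai k + eps)) + Lbari < (∑ k, p k * Ai k) + Li) ∧
        (((∑ k, p k * Ai k) + Li - (∑ k, p k * (Ai k + eps))) / Lbari < phi)) := by
  set S := ∑ k, p k with hS
  have hS0 : 0 < S := by
    rcases lt_or_ge 0 S with h | h
    · exact h
    · exfalso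
      have : Li / S ≤ 0 := div_nonpos_of_nonneg_of_nonpos hLi.le h
      linarith
  have hepsS : eps * S < Li := (lt_div_iff₀ hS0).1 heps'
  have hD : 0 < Li - eps * S := by linarith
  have hphi0 : 0 < phi := by linarith
  have hint : (Li - eps * S) / phi < Li - eps * S :=
    div_lt_self hD hphi
  refine ⟨hint, fun Lbari h1 h2 => ?_⟩
  have hLb : 0 < Lbari := lt_of_lt_of_le (div_pos hD hphi0) h1.le
  have hsum : (∑ k, p k * (Ai k + eps)) = (∑ k, p k * Ai k) + eps * S := by
    rw [hS, Finset.mul_sum, ← Finset.sum_add_distrib]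
    congr 1; funext k; ring
  have hepsS0 : 0 < eps * S := mul_pos heps hS0
  refine ⟨hLb, fun j => by linarith, by linarith, by rw [hsum]; linarith, ?_⟩
  rw [hsum]
  have : (∑ k, p k * Ai k) + Li - ((∑ k, p k * Ai k) + eps * S) = Li - eps * S := by ring
  rw [this, div_lt_iff₀ hLb]
  have := (div_lt_iff₀' hphi0).1 h1
  linarith
end
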